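/- (C² continuity of the Clough–Tocher quintic pieces, equation k = 2.) Let b̃ : {α ∈ ℕ³ : |α| = 3} → ℝ and define C_i (i = 1,2,3) by the Clough–Tocher coefficient pipeline. Then for every i ∈ {1,2,3} (indices taken mod 3) and every 0 ≤ ρ ≤ 3: C_{i+1}(2, ρ, 3−ρ) = C_i(5−ρ, ρ, 0) − 6·C_i(4−ρ, ρ+1, 0) + 9·C_i(3−ρ, ρ+2, 0) + 2·C_i(4−ρ, ρ, 1) − 6·C_i(3−ρ, ρ+1, 1) + C_i(3−ρ, ρ, 2). -/

import Mathlib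

open Finset

/-- The trivariate Bernstein polynomial `B_a^d(l) = (d!/(a₁!a₂!a₃!)) l₁^{a₁} l₂^{a₂} l₃^{a₃}`. -/
noncomputable def Bern (d : ℕ) (a : Fin 3 → ℕ) (l : Fin 3 → ℝ) : ℝ :=
  ((Nat.factorial d : ℝ) /
      ((Nat.factorial (a 0) : ℝ) * (Nat.factorial (a 1) : ℝ) * (Nat.factorial (a 2) : ℝ))) *
    (l 0 ^ a 0 * l 1 ^ a 1 * l 2 ^ a 2)

/-- The `k`-th standard basis multi-index `ε_k` of `ℕ³`. -/
def eps (k : Fin 3) : Fin 3 → ℕ := fun j => if j = k then 1 else 0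

/-- The univariate Bernstein polynomial `B_k^n(t) = (n choose k) t^k (1-t)^{n-k}`
(automatically `0` when `k > n`). -/
noncomputable def bern1 (n k : ℕ) (t : ℝ) : ℝ :=
  (Nat.choose n k : ℝ) * t ^ k * (1 - t) ^ (n - k)

/-- The cyclic permutation `σ` of the three coordinates. -/
def rot3 (x : Fin 3 → ℕ) : Fin 3 → ℕ := ![x 2, x 0, x 1]

/-- The subdivision coefficients `b̃ᵢ(ρ) = Σ_{|α|=ρ₂} b̃(α + σ^i(ρ₃,ρ₁,0)) B_α^{ρ₂}(1/3,1/3,1/3)`. -/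
noncomputable def btil (b : (Fin 3 → ℕ) → ℝ) (i : ℕ) (ρ : Fin 3 → ℕ) : ℝ :=
  ∑ a ∈ Finset.Nat.antidiagonalTuple 3 (ρ 1),
    b (a + rot3^[i] ![ρ 2, ρ 0, 0]) * Bern (ρ 1) a (fun _ => 1 / 3)

/-- The doubly degree-raised coefficients
`b̃ᵢ⁽²⁾(μ) = Σ_{k,l} (μ_k(μ_l - δ_{kl})/20) b̃ᵢ(μ - ε_k - ε_l)`
(terms where `μ - ε_k - ε_l` would have a negative entry carry a zero coefficient). -/
noncomputable def btil2 (b : (Fin 3 → ℕ) → ℝ) (i : ℕ) (μ : Fin 3 → ℕ) : ℝ :=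
  ∑ k : Fin 3, ∑ l : Fin 3,
    ((μ k : ℝ) * ((μ l : ℝ) - if k = l then 1 else 0) / 20) * btil b i (μ - eps k - eps l)

/-- The Bézier coefficients `Cᵢ(β) = Σ_{|μ|=5} b̃_{i+2}⁽²⁾(μ) B_{μ₁}^{β₁}(5/3) B_{μ₃}^{β₃}(5/3)`. -/
noncomputable def Ccoef (b : (Fin 3 → ℕ) → ℝ) (i : ℕ) (β : Fin 3 → ℕ) : ℝ :=
  ∑ μ ∈ Finset.Nat.antidiagonalTuple 3 5,
    btil2 b (i + 2) μ * bern1 (β 0) (μ 0) (5 / 3) * bern1 (β 2) (μ 2) (5 / 3)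



private lemma adt0 (f : (Fin 3 → ℕ) → ℝ) : ∑ x ∈ Finset.Nat.antidiagonalTuple 3 0, f x = f ![0,0,0] + (0) := rfl

private lemma adt1 (f : (Fin 3 → ℕ) → ℝ) : ∑ x ∈ Finset.Nat.antidiagonalTuple 3 1, f x = f ![0,0,1] + (f ![0,1,0] + (f ![1,0,0] + (0))) := rfl

private lemma adt2 (f : (Fin 3 → ℕ) → ℝ) : ∑ x ∈ Finset.Nat.antidiagonalTuple 3 2, f x = f ![0,0,2] + (f ![0,1,1] + (f ![0,2,0] + (f ![1,0,1] + (f ![1,1,0] + (f ![2,0,0] + (0)))))) := rfl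

private lemma adt3 (f : (Fin 3 → ℕ) → ℝ) : ∑ x ∈ Finset.Nat.antidiagonalTuple 3 3, f x = f ![0,0,3] + (f ![0,1,2] + (f ![0,2,1] + (f ![0,3,0] + (f ![1,0,2] + (f ![1,1,1] + (f ![1,2,0] + (f ![2,0,1] + (f ![2,1,0] + (f ![3,0,0] + (0)))))))))) := rfl

private lemma adt4 (f : (Fin 3 → ℕ) → ℝ) : ∑ x ∈ Finset.Nat.antidiagonalTuple 3 4, f x = f ![0,0,4] + (f ![0,1,3] + (f ![0,2,2] + (f ![0,3,1] + (f ![0,4,0] + (f ![1,0,3] + (f ![1,1,2] + (f ![1,2,1] + (f ![1,3,0] + (f ![2,0,2] + (f ![2,1,1] + (f ![2,2,0] + (f ![3,0,1] + (f ![3,1,0] + (f ![4,0,0] + (0))))))))))))))) := rfl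

private lemma adt5 (f : (Fin 3 → ℕ) → ℝ) : ∑ x ∈ Finset.Nat.antidiagonalTuple 3 5, f x = f ![0,0,5] + (f ![0,1,4] + (f ![0,2,3] + (f ![0,3,2] + (f ![0,4,1] + (f ![0,5,0] + (f ![1,0,4] + (f ![1,1,3] + (f ![1,2,2] + (f ![1,3,1] + (f ![1,4,0] + (f ![2,0,3] + (f ![2,1,2] + (f ![2,2,1] + (f ![2,3,0] + (f ![3,0,2] + (f ![3,1,1] + (f ![3,2,0] + (f ![4,0,1] + (f ![4,1,0] + (f ![5,0,0] + (0))))))))))))))))))))) := rfl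

private lemma b1_0_0 : bern1 0 0 (5/3) = (1 : ℝ) := by
  rw [bern1, (by decide : Nat.choose 0 0 = 1)]; norm_num

private lemma b1_0_1 : bern1 0 1 (5/3) = (0 : ℝ) := by
  rw [bern1, (by decide : Nat.choose 0 1 = 0)]; norm_num

private lemma b1_0_2 : bern1 0 2 (5/3) = (0 : ℝ) := by
  rw [bern1, (by decide : Nat.choose 0 2 = 0)]; norm_num

private lemma b1_0_3 : bern1 0 3 (5/3) = (0 : ℝ) := by
  rw [bern1, (by decide : Nat.choose 0 3 = 0)]; norm_num

private lemma b1_0_4 : bern1 0 4 (5/3) = (0 : ℝ) := by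
  rw [bern1, (by decide : Nat.choose 0 4 = 0)]; norm_num

private lemma b1_0_5 : bern1 0 5 (5/3) = (0 : ℝ) := by
  rw [bern1, (by decide : Nat.choose 0 5 = 0)]; norm_num

private lemma b1_1_0 : bern1 1 0 (5/3) = ((-2 : ℝ) / 3) := by
  rw [bern1, (by decide : Nat.choose 1 0 = 1)]; norm_num

private lemma b1_1_1 : bern1 1 1 (5/3) = ((5 : ℝ) / 3) := by
  rw [bern1, (by decide : Nat.choose 1 1 = 1)]; norm_num

private lemma b1_1_2 : bern1 1 2 (5/3) = (0 : ℝ) := by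
  rw [bern1, (by decide : Nat.choose 1 2 = 0)]; norm_num

private lemma b1_1_3 : bern1 1 3 (5/3) = (0 : ℝ) := by
  rw [bern1, (by decide : Nat.choose 1 3 = 0)]; norm_num

private lemma b1_1_4 : bern1 1 4 (5/3) = (0 : ℝ) := by
  rw [bern1, (by decide : Nat.choose 1 4 = 0)]; norm_num

private lemma b1_1_5 : bern1 1 5 (5/3) = (0 : ℝ) := by
  rw [bern1, (by decide : Nat.choose 1 5 = 0)]; norm_num

private lemma b1_2_0 : bern1 2 0 (5/3) = ((4 : ℝ) / 9) := by
  rw [bern1, (by decide : Nat.choose 2 0 = 1)]; norm_num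

private lemma b1_2_1 : bern1 2 1 (5/3) = ((-20 : ℝ) / 9) := by
  rw [bern1, (by decide : Nat.choose 2 1 = 2)]; norm_num

private lemma b1_2_2 : bern1 2 2 (5/3) = ((25 : ℝ) / 9) := by
  rw [bern1, (by decide : Nat.choose 2 2 = 1)]; norm_num

private lemma b1_2_3 : bern1 2 3 (5/3) = (0 : ℝ) := by
  rw [bern1, (by decide : Nat.choose 2 3 = 0)]; norm_num

private lemma b1_2_4 : bern1 2 4 (5/3) = (0 : ℝ) := by
  rw [bern1, (by decide : Nat.choose 2 4 = 0)]; norm_num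

private lemma b1_2_5 : bern1 2 5 (5/3) = (0 : ℝ) := by
  rw [bern1, (by decide : Nat.choose 2 5 = 0)]; norm_num

private lemma b1_3_0 : bern1 3 0 (5/3) = ((-8 : ℝ) / 27) := by
  rw [bern1, (by decide : Nat.choose 3 0 = 1)]; norm_num

private lemma b1_3_1 : bern1 3 1 (5/3) = ((20 : ℝ) / 9) := by
  rw [bern1, (by decide : Nat.choose 3 1 = 3)]; norm_num

private lemma b1_3_2 : bern1 3 2 (5/3) = ((-50 : ℝ) / 9) := by
  rw [bern1, (by decide : Nat.choose 3 2 = 3)]; norm_num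

private lemma b1_3_3 : bern1 3 3 (5/3) = ((125 : ℝ) / 27) := by
  rw [bern1, (by decide : Nat.choose 3 3 = 1)]; norm_num

private lemma b1_3_4 : bern1 3 4 (5/3) = (0 : ℝ) := by
  rw [bern1, (by decide : Nat.choose 3 4 = 0)]; norm_num

private lemma b1_3_5 : bern1 3 5 (5/3) = (0 : ℝ) := by
  rw [bern1, (by decide : Nat.choose 3 5 = 0)]; norm_num

private lemma b1_4_0 : bern1 4 0 (5/3) = ((16 : ℝ) / 81) := by
  rw [bern1, (by decide : Nat.choose 4 0 = 1)]; norm_num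

private lemma b1_4_1 : bern1 4 1 (5/3) = ((-160 : ℝ) / 81) := by
  rw [bern1, (by decide : Nat.choose 4 1 = 4)]; norm_num

private lemma b1_4_2 : bern1 4 2 (5/3) = ((200 : ℝ) / 27) := by
  rw [bern1, (by decide : Nat.choose 4 2 = 6)]; norm_num

private lemma b1_4_3 : bern1 4 3 (5/3) = ((-1000 : ℝ) / 81) := by
  rw [bern1, (by decide : Nat.choose 4 3 = 4)]; norm_num

private lemma b1_4_4 : bern1 4 4 (5/3) = ((625 : ℝ) / 81) := by
  rw [bern1, (by decide : Nat.choose 4 4 = 1)]; norm_num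

private lemma b1_4_5 : bern1 4 5 (5/3) = (0 : ℝ) := by
  rw [bern1, (by decide : Nat.choose 4 5 = 0)]; norm_num

private lemma b1_5_0 : bern1 5 0 (5/3) = ((-32 : ℝ) / 243) := by
  rw [bern1, (by decide : Nat.choose 5 0 = 1)]; norm_num

private lemma b1_5_1 : bern1 5 1 (5/3) = ((400 : ℝ) / 243) := by
  rw [bern1, (by decide : Nat.choose 5 1 = 5)]; norm_num

private lemma b1_5_2 : bern1 5 2 (5/3) = ((-2000 : ℝ) / 243) := by
  rw [bern1, (by decide : Nat.choose 5 2 = 10)]; norm_num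

private lemma b1_5_3 : bern1 5 3 (5/3) = ((5000 : ℝ) / 243) := by
  rw [bern1, (by decide : Nat.choose 5 3 = 10)]; norm_num

private lemma b1_5_4 : bern1 5 4 (5/3) = ((-6250 : ℝ) / 243) := by
  rw [bern1, (by decide : Nat.choose 5 4 = 5)]; norm_num

private lemma b1_5_5 : bern1 5 5 (5/3) = ((3125 : ℝ) / 243) := by
  rw [bern1, (by decide : Nat.choose 5 5 = 1)]; norm_num

private lemma Bv_0_0_0_0 : Bern 0 ![0,0,0] (fun _ => 1/3) = (1 : ℝ) := by norm_num [Bern, Nat.factorial, Matrix.cons_val_two, Matrix.tail_cons, Matrix.head_cons]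

private lemma Bv_1_0_0_1 : Bern 1 ![0,0,1] (fun _ => 1/3) = ((1 : ℝ) / 3) := by norm_num [Bern, Nat.factorial, Matrix.cons_val_two, Matrix.tail_cons, Matrix.head_cons]

private lemma Bv_1_0_1_0 : Bern 1 ![0,1,0] (fun _ => 1/3) = ((1 : ℝ) / 3) := by norm_num [Bern, Nat.factorial, Matrix.cons_val_two, Matrix.tail_cons, Matrix.head_cons]

private lemma Bv_1_1_0_0 : Bern 1 ![1,0,0] (fun _ => 1/3) = ((1 : ℝ) / 3) := by norm_num [Bern, Nat.factorial, Matrix.cons_val_two, Matrix.tail_cons, Matrix.head_cons]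

private lemma Bv_2_0_0_2 : Bern 2 ![0,0,2] (fun _ => 1/3) = ((1 : ℝ) / 9) := by norm_num [Bern, Nat.factorial, Matrix.cons_val_two, Matrix.tail_cons, Matrix.head_cons]

private lemma Bv_2_0_1_1 : Bern 2 ![0,1,1] (fun _ => 1/3) = ((2 : ℝ) / 9) := by norm_num [Bern, Nat.factorial, Matrix.cons_val_two, Matrix.tail_cons, Matrix.head_cons]

private lemma Bv_2_0_2_0 : Bern 2 ![0,2,0] (fun _ => 1/3) = ((1 : ℝ) / 9) := by norm_num [Bern, Nat.factorial, Matrix.cons_val_two, Matrix.tail_cons, Matrix.head_cons]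

private lemma Bv_2_1_0_1 : Bern 2 ![1,0,1] (fun _ => 1/3) = ((2 : ℝ) / 9) := by norm_num [Bern, Nat.factorial, Matrix.cons_val_two, Matrix.tail_cons, Matrix.head_cons]

private lemma Bv_2_1_1_0 : Bern 2 ![1,1,0] (fun _ => 1/3) = ((2 : ℝ) / 9) := by norm_num [Bern, Nat.factorial, Matrix.cons_val_two, Matrix.tail_cons, Matrix.head_cons]

private lemma Bv_2_2_0_0 : Bern 2 ![2,0,0] (fun _ => 1/3) = ((1 : ℝ) / 9) := by norm_num [Bern, Nat.factorial, Matrix.cons_val_two, Matrix.tail_cons, Matrix.head_cons]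

private lemma Bv_3_0_0_3 : Bern 3 ![0,0,3] (fun _ => 1/3) = ((1 : ℝ) / 27) := by norm_num [Bern, Nat.factorial, Matrix.cons_val_two, Matrix.tail_cons, Matrix.head_cons]

private lemma Bv_3_0_1_2 : Bern 3 ![0,1,2] (fun _ => 1/3) = ((1 : ℝ) / 9) := by norm_num [Bern, Nat.factorial, Matrix.cons_val_two, Matrix.tail_cons, Matrix.head_cons]

private lemma Bv_3_0_2_1 : Bern 3 ![0,2,1] (fun _ => 1/3) = ((1 : ℝ) / 9) := by norm_num [Bern, Nat.factorial, Matrix.cons_val_two, Matrix.tail_cons, Matrix.head_cons]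

private lemma Bv_3_0_3_0 : Bern 3 ![0,3,0] (fun _ => 1/3) = ((1 : ℝ) / 27) := by norm_num [Bern, Nat.factorial, Matrix.cons_val_two, Matrix.tail_cons, Matrix.head_cons]

private lemma Bv_3_1_0_2 : Bern 3 ![1,0,2] (fun _ => 1/3) = ((1 : ℝ) / 9) := by norm_num [Bern, Nat.factorial, Matrix.cons_val_two, Matrix.tail_cons, Matrix.head_cons]

private lemma Bv_3_1_1_1 : Bern 3 ![1,1,1] (fun _ => 1/3) = ((2 : ℝ) / 9) := by norm_num [Bern, Nat.factorial, Matrix.cons_val_two, Matrix.tail_cons, Matrix.head_cons]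

private lemma Bv_3_1_2_0 : Bern 3 ![1,2,0] (fun _ => 1/3) = ((1 : ℝ) / 9) := by norm_num [Bern, Nat.factorial, Matrix.cons_val_two, Matrix.tail_cons, Matrix.head_cons]

private lemma Bv_3_2_0_1 : Bern 3 ![2,0,1] (fun _ => 1/3) = ((1 : ℝ) / 9) := by norm_num [Bern, Nat.factorial, Matrix.cons_val_two, Matrix.tail_cons, Matrix.head_cons]

private lemma Bv_3_2_1_0 : Bern 3 ![2,1,0] (fun _ => 1/3) = ((1 : ℝ) / 9) := by norm_num [Bern, Nat.factorial, Matrix.cons_val_two, Matrix.tail_cons, Matrix.head_cons]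

private lemma Bv_3_3_0_0 : Bern 3 ![3,0,0] (fun _ => 1/3) = ((1 : ℝ) / 27) := by norm_num [Bern, Nat.factorial, Matrix.cons_val_two, Matrix.tail_cons, Matrix.head_cons]

private lemma Bv_4_0_0_4 : Bern 4 ![0,0,4] (fun _ => 1/3) = ((1 : ℝ) / 81) := by norm_num [Bern, Nat.factorial, Matrix.cons_val_two, Matrix.tail_cons, Matrix.head_cons]

private lemma Bv_4_0_1_3 : Bern 4 ![0,1,3] (fun _ => 1/3) = ((4 : ℝ) / 81) := by norm_num [Bern, Nat.factorial, Matrix.cons_val_two, Matrix.tail_cons, Matrix.head_cons]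

private lemma Bv_4_0_2_2 : Bern 4 ![0,2,2] (fun _ => 1/3) = ((2 : ℝ) / 27) := by norm_num [Bern, Nat.factorial, Matrix.cons_val_two, Matrix.tail_cons, Matrix.head_cons]

private lemma Bv_4_0_3_1 : Bern 4 ![0,3,1] (fun _ => 1/3) = ((4 : ℝ) / 81) := by norm_num [Bern, Nat.factorial, Matrix.cons_val_two, Matrix.tail_cons, Matrix.head_cons]

private lemma Bv_4_0_4_0 : Bern 4 ![0,4,0] (fun _ => 1/3) = ((1 : ℝ) / 81) := by norm_num [Bern, Nat.factorial, Matrix.cons_val_two, Matrix.tail_cons, Matrix.head_cons]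

private lemma Bv_4_1_0_3 : Bern 4 ![1,0,3] (fun _ => 1/3) = ((4 : ℝ) / 81) := by norm_num [Bern, Nat.factorial, Matrix.cons_val_two, Matrix.tail_cons, Matrix.head_cons]

private lemma Bv_4_1_1_2 : Bern 4 ![1,1,2] (fun _ => 1/3) = ((4 : ℝ) / 27) := by norm_num [Bern, Nat.factorial, Matrix.cons_val_two, Matrix.tail_cons, Matrix.head_cons]

private lemma Bv_4_1_2_1 : Bern 4 ![1,2,1] (fun _ => 1/3) = ((4 : ℝ) / 27) := by norm_num [Bern, Nat.factorial, Matrix.cons_val_two, Matrix.tail_cons, Matrix.head_cons]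

private lemma Bv_4_1_3_0 : Bern 4 ![1,3,0] (fun _ => 1/3) = ((4 : ℝ) / 81) := by norm_num [Bern, Nat.factorial, Matrix.cons_val_two, Matrix.tail_cons, Matrix.head_cons]

private lemma Bv_4_2_0_2 : Bern 4 ![2,0,2] (fun _ => 1/3) = ((2 : ℝ) / 27) := by norm_num [Bern, Nat.factorial, Matrix.cons_val_two, Matrix.tail_cons, Matrix.head_cons]

private lemma Bv_4_2_1_1 : Bern 4 ![2,1,1] (fun _ => 1/3) = ((4 : ℝ) / 27) := by norm_num [Bern, Nat.factorial, Matrix.cons_val_two, Matrix.tail_cons, Matrix.head_cons]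

private lemma Bv_4_2_2_0 : Bern 4 ![2,2,0] (fun _ => 1/3) = ((2 : ℝ) / 27) := by norm_num [Bern, Nat.factorial, Matrix.cons_val_two, Matrix.tail_cons, Matrix.head_cons]

private lemma Bv_4_3_0_1 : Bern 4 ![3,0,1] (fun _ => 1/3) = ((4 : ℝ) / 81) := by norm_num [Bern, Nat.factorial, Matrix.cons_val_two, Matrix.tail_cons, Matrix.head_cons]

private lemma Bv_4_3_1_0 : Bern 4 ![3,1,0] (fun _ => 1/3) = ((4 : ℝ) / 81) := by norm_num [Bern, Nat.factorial, Matrix.cons_val_two, Matrix.tail_cons, Matrix.head_cons]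

private lemma Bv_4_4_0_0 : Bern 4 ![4,0,0] (fun _ => 1/3) = ((1 : ℝ) / 81) := by norm_num [Bern, Nat.factorial, Matrix.cons_val_two, Matrix.tail_cons, Matrix.head_cons]

private lemma Bv_5_0_0_5 : Bern 5 ![0,0,5] (fun _ => 1/3) = ((1 : ℝ) / 243) := by norm_num [Bern, Nat.factorial, Matrix.cons_val_two, Matrix.tail_cons, Matrix.head_cons]

private lemma Bv_5_0_1_4 : Bern 5 ![0,1,4] (fun _ => 1/3) = ((5 : ℝ) / 243) := by norm_num [Bern, Nat.factorial, Matrix.cons_val_two, Matrix.tail_cons, Matrix.head_cons]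

private lemma Bv_5_0_2_3 : Bern 5 ![0,2,3] (fun _ => 1/3) = ((10 : ℝ) / 243) := by norm_num [Bern, Nat.factorial, Matrix.cons_val_two, Matrix.tail_cons, Matrix.head_cons]

private lemma Bv_5_0_3_2 : Bern 5 ![0,3,2] (fun _ => 1/3) = ((10 : ℝ) / 243) := by norm_num [Bern, Nat.factorial, Matrix.cons_val_two, Matrix.tail_cons, Matrix.head_cons]

private lemma Bv_5_0_4_1 : Bern 5 ![0,4,1] (fun _ => 1/3) = ((5 : ℝ) / 243) := by norm_num [Bern, Nat.factorial, Matrix.cons_val_two, Matrix.tail_cons, Matrix.head_cons]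

private lemma Bv_5_0_5_0 : Bern 5 ![0,5,0] (fun _ => 1/3) = ((1 : ℝ) / 243) := by norm_num [Bern, Nat.factorial, Matrix.cons_val_two, Matrix.tail_cons, Matrix.head_cons]

private lemma Bv_5_1_0_4 : Bern 5 ![1,0,4] (fun _ => 1/3) = ((5 : ℝ) / 243) := by norm_num [Bern, Nat.factorial, Matrix.cons_val_two, Matrix.tail_cons, Matrix.head_cons]

private lemma Bv_5_1_1_3 : Bern 5 ![1,1,3] (fun _ => 1/3) = ((20 : ℝ) / 243) := by norm_num [Bern, Nat.factorial, Matrix.cons_val_two, Matrix.tail_cons, Matrix.head_cons]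

private lemma Bv_5_1_2_2 : Bern 5 ![1,2,2] (fun _ => 1/3) = ((10 : ℝ) / 81) := by norm_num [Bern, Nat.factorial, Matrix.cons_val_two, Matrix.tail_cons, Matrix.head_cons]

private lemma Bv_5_1_3_1 : Bern 5 ![1,3,1] (fun _ => 1/3) = ((20 : ℝ) / 243) := by norm_num [Bern, Nat.factorial, Matrix.cons_val_two, Matrix.tail_cons, Matrix.head_cons]

private lemma Bv_5_1_4_0 : Bern 5 ![1,4,0] (fun _ => 1/3) = ((5 : ℝ) / 243) := by norm_num [Bern, Nat.factorial, Matrix.cons_val_two, Matrix.tail_cons, Matrix.head_cons]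

private lemma Bv_5_2_0_3 : Bern 5 ![2,0,3] (fun _ => 1/3) = ((10 : ℝ) / 243) := by norm_num [Bern, Nat.factorial, Matrix.cons_val_two, Matrix.tail_cons, Matrix.head_cons]

private lemma Bv_5_2_1_2 : Bern 5 ![2,1,2] (fun _ => 1/3) = ((10 : ℝ) / 81) := by norm_num [Bern, Nat.factorial, Matrix.cons_val_two, Matrix.tail_cons, Matrix.head_cons]

private lemma Bv_5_2_2_1 : Bern 5 ![2,2,1] (fun _ => 1/3) = ((10 : ℝ) / 81) := by norm_num [Bern, Nat.factorial, Matrix.cons_val_two, Matrix.tail_cons, Matrix.head_cons]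

private lemma Bv_5_2_3_0 : Bern 5 ![2,3,0] (fun _ => 1/3) = ((10 : ℝ) / 243) := by norm_num [Bern, Nat.factorial, Matrix.cons_val_two, Matrix.tail_cons, Matrix.head_cons]

private lemma Bv_5_3_0_2 : Bern 5 ![3,0,2] (fun _ => 1/3) = ((10 : ℝ) / 243) := by norm_num [Bern, Nat.factorial, Matrix.cons_val_two, Matrix.tail_cons, Matrix.head_cons]

private lemma Bv_5_3_1_1 : Bern 5 ![3,1,1] (fun _ => 1/3) = ((20 : ℝ) / 243) := by norm_num [Bern, Nat.factorial, Matrix.cons_val_two, Matrix.tail_cons, Matrix.head_cons]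

private lemma Bv_5_3_2_0 : Bern 5 ![3,2,0] (fun _ => 1/3) = ((10 : ℝ) / 243) := by norm_num [Bern, Nat.factorial, Matrix.cons_val_two, Matrix.tail_cons, Matrix.head_cons]

private lemma Bv_5_4_0_1 : Bern 5 ![4,0,1] (fun _ => 1/3) = ((5 : ℝ) / 243) := by norm_num [Bern, Nat.factorial, Matrix.cons_val_two, Matrix.tail_cons, Matrix.head_cons]

private lemma Bv_5_4_1_0 : Bern 5 ![4,1,0] (fun _ => 1/3) = ((5 : ℝ) / 243) := by norm_num [Bern, Nat.factorial, Matrix.cons_val_two, Matrix.tail_cons, Matrix.head_cons]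

private lemma Bv_5_5_0_0 : Bern 5 ![5,0,0] (fun _ => 1/3) = ((1 : ℝ) / 243) := by norm_num [Bern, Nat.factorial, Matrix.cons_val_two, Matrix.tail_cons, Matrix.head_cons]


private lemma eps0 : eps 0 = ![1,0,0] := by funext j; fin_cases j <;> rfl
private lemma eps1 : eps 1 = ![0,1,0] := by funext j; fin_cases j <;> rfl
private lemma eps2 : eps 2 = ![0,0,1] := by funext j; fin_cases j <;> rfl
private lemma rot3c (a b c : ℕ) : rot3 ![a,b,c] = ![c,a,b] := by funext j; fin_cases j <;> rfl
private lemma rit3 (a b c : ℕ) : rot3^[3] ![a,b,c] = ![a,b,c] := by funext j; fin_cases j <;> rfl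
private lemma rot33 (x : Fin 3 → ℕ) : rot3 (rot3 (rot3 x)) = x := by funext j; fin_cases j <;> rfl
private lemma rot3_add (x y : Fin 3 → ℕ) : rot3 (x + y) = rot3 x + rot3 y := by
  funext j; fin_cases j <;> simp [rot3]
private lemma Bern_rot (n : ℕ) (a : Fin 3 → ℕ) :
    Bern n (rot3 a) (fun _ => 1/3) = Bern n a (fun _ => 1/3) := by
  simp only [Bern, rot3, Matrix.cons_val_zero, Matrix.cons_val_one, Matrix.head_cons,
    Matrix.cons_val_two, Matrix.tail_cons]
  ring
private lemma mem_adt_rot {n : ℕ} {x : Fin 3 → ℕ} (h : x ∈ Finset.Nat.antidiagonalTuple 3 n) :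
    rot3 x ∈ Finset.Nat.antidiagonalTuple 3 n := by
  rw [Finset.Nat.mem_antidiagonalTuple, Fin.sum_univ_three] at h ⊢
  simp only [rot3, Matrix.cons_val_zero, Matrix.cons_val_one, Matrix.head_cons,
    Matrix.cons_val_two, Matrix.tail_cons]
  omega
private lemma btil_rot (b : (Fin 3 → ℕ) → ℝ) (i : ℕ) (ρ : Fin 3 → ℕ) :
    btil b (i+1) ρ = btil (b ∘ rot3) i ρ := by
  unfold btil
  refine Finset.sum_nbij' (fun a => rot3 (rot3 a)) (fun a => rot3 a)
    (fun a ha => mem_adt_rot (mem_adt_rot ha)) (fun a ha => mem_adt_rot ha)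
    (fun a _ => rot33 a) (fun a _ => rot33 a) ?_
  intro a _
  rw [Function.comp_apply, Bern_rot, Bern_rot, Function.iterate_succ_apply',
    rot3_add, rot33]
private lemma btil2_rot (b : (Fin 3 → ℕ) → ℝ) (i : ℕ) (μ : Fin 3 → ℕ) :
    btil2 b (i+1) μ = btil2 (b ∘ rot3) i μ := by
  unfold btil2
  exact Finset.sum_congr rfl fun k _ => Finset.sum_congr rfl fun l _ => by rw [btil_rot]
private lemma Ccoef_rot (b : (Fin 3 → ℕ) → ℝ) (i : ℕ) (β : Fin 3 → ℕ) :
    Ccoef b (i+1) β = Ccoef (b ∘ rot3) i β := by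
  unfold Ccoef
  refine Finset.sum_congr rfl fun μ _ => ?_
  rw [show btil2 b (i+1+2) μ = btil2 (b ∘ rot3) (i+2) μ from btil2_rot b (i+2) μ]
private lemma C2 (b : (Fin 3 → ℕ) → ℝ) (β : Fin 3 → ℕ) : Ccoef b 2 β = Ccoef (b ∘ rot3) 1 β :=
  Ccoef_rot b 1 β
private lemma C3 (b : (Fin 3 → ℕ) → ℝ) (β : Fin 3 → ℕ) : Ccoef b 3 β = Ccoef (b ∘ rot3) 2 β :=
  Ccoef_rot b 2 β
private lemma C4 (b : (Fin 3 → ℕ) → ℝ) (β : Fin 3 → ℕ) : Ccoef b 4 β = Ccoef (b ∘ rot3) 3 β :=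
  Ccoef_rot b 3 β


set_option maxHeartbeats 4000000 in
private lemma key0 (c : (Fin 3 → ℕ) → ℝ) :
    Ccoef (c ∘ rot3) 1 ![2, 0, 3] =
      Ccoef c 1 ![5, 0, 0] - 6 * Ccoef c 1 ![4, 1, 0]
        + 9 * Ccoef c 1 ![3, 2, 0] + 2 * Ccoef c 1 ![4, 0, 1]
        - 6 * Ccoef c 1 ![3, 1, 1] + Ccoef c 1 ![3, 0, 2] := by
  simp only [Ccoef, adt5, Matrix.cons_val_zero, Matrix.cons_val_one, Matrix.head_cons,
    Matrix.cons_val_two, Matrix.tail_cons, Nat.reduceAdd, Nat.reduceSub,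
    b1_0_0,b1_0_1,b1_0_2,b1_0_3,b1_0_4,b1_0_5,b1_1_0,b1_1_1,b1_1_2,b1_1_3,b1_1_4,b1_1_5,b1_2_0,b1_2_1,b1_2_2,b1_2_3,b1_2_4,b1_2_5,b1_3_0,b1_3_1,b1_3_2,b1_3_3,b1_3_4,b1_3_5,b1_4_0,b1_4_1,b1_4_2,b1_4_3,b1_4_4,b1_4_5,b1_5_0,b1_5_1,b1_5_2,b1_5_3,b1_5_4,b1_5_5,
    mul_zero, zero_mul, add_zero, zero_add]
  simp only [btil2, Fin.sum_univ_three, eps0, eps1, eps2, Matrix.cons_sub_cons,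
    Matrix.empty_sub_empty, Matrix.cons_val_zero, Matrix.cons_val_one, Matrix.head_cons,
    Matrix.cons_val_two, Matrix.tail_cons, Nat.reduceSub, Nat.cast_ofNat, Nat.cast_zero,
    Nat.cast_one, Fin.reduceEq, reduceIte, sub_self, sub_zero, zero_mul, mul_zero, zero_div,
    zero_add, add_zero]
  simp only [btil, Matrix.cons_val_zero, Matrix.cons_val_one, Matrix.head_cons,
    Matrix.cons_val_two, Matrix.tail_cons, Nat.reduceAdd, adt0, adt1, adt2, adt3, adt4, adt5,
    rit3, Function.comp_apply, Matrix.cons_add_cons, Matrix.empty_add_empty, rot3c,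
    Bv_0_0_0_0,Bv_1_0_0_1,Bv_1_0_1_0,Bv_1_1_0_0,Bv_2_0_0_2,Bv_2_0_1_1,Bv_2_0_2_0,Bv_2_1_0_1,Bv_2_1_1_0,Bv_2_2_0_0,Bv_3_0_0_3,Bv_3_0_1_2,Bv_3_0_2_1,Bv_3_0_3_0,Bv_3_1_0_2,Bv_3_1_1_1,Bv_3_1_2_0,Bv_3_2_0_1,Bv_3_2_1_0,Bv_3_3_0_0,Bv_4_0_0_4,Bv_4_0_1_3,Bv_4_0_2_2,Bv_4_0_3_1,Bv_4_0_4_0,Bv_4_1_0_3,Bv_4_1_1_2,Bv_4_1_2_1,Bv_4_1_3_0,Bv_4_2_0_2,Bv_4_2_1_1,Bv_4_2_2_0,Bv_4_3_0_1,Bv_4_3_1_0,Bv_4_4_0_0,Bv_5_0_0_5,Bv_5_0_1_4,Bv_5_0_2_3,Bv_5_0_3_2,Bv_5_0_4_1,Bv_5_0_5_0,Bv_5_1_0_4,Bv_5_1_1_3,Bv_5_1_2_2,Bv_5_1_3_1,Bv_5_1_4_0,Bv_5_2_0_3,Bv_5_2_1_2,Bv_5_2_2_1,Bv_5_2_3_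0,Bv_5_3_0_2,Bv_5_3_1_1,Bv_5_3_2_0,Bv_5_4_0_1,Bv_5_4_1_0,Bv_5_5_0_0,
    mul_zero, zero_mul, add_zero, zero_add]
  ring

set_option maxHeartbeats 4000000 in
private lemma key1 (c : (Fin 3 → ℕ) → ℝ) :
    Ccoef (c ∘ rot3) 1 ![2, 1, 2] =
      Ccoef c 1 ![4, 1, 0] - 6 * Ccoef c 1 ![3, 2, 0]
        + 9 * Ccoef c 1 ![2, 3, 0] + 2 * Ccoef c 1 ![3, 1, 1]
        - 6 * Ccoef c 1 ![2, 2, 1] + Ccoef c 1 ![2, 1, 2] := by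
  simp only [Ccoef, adt5, Matrix.cons_val_zero, Matrix.cons_val_one, Matrix.head_cons,
    Matrix.cons_val_two, Matrix.tail_cons, Nat.reduceAdd, Nat.reduceSub,
    b1_0_0,b1_0_1,b1_0_2,b1_0_3,b1_0_4,b1_0_5,b1_1_0,b1_1_1,b1_1_2,b1_1_3,b1_1_4,b1_1_5,b1_2_0,b1_2_1,b1_2_2,b1_2_3,b1_2_4,b1_2_5,b1_3_0,b1_3_1,b1_3_2,b1_3_3,b1_3_4,b1_3_5,b1_4_0,b1_4_1,b1_4_2,b1_4_3,b1_4_4,b1_4_5,b1_5_0,b1_5_1,b1_5_2,b1_5_3,b1_5_4,b1_5_5,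
    mul_zero, zero_mul, add_zero, zero_add]
  simp only [btil2, Fin.sum_univ_three, eps0, eps1, eps2, Matrix.cons_sub_cons,
    Matrix.empty_sub_empty, Matrix.cons_val_zero, Matrix.cons_val_one, Matrix.head_cons,
    Matrix.cons_val_two, Matrix.tail_cons, Nat.reduceSub, Nat.cast_ofNat, Nat.cast_zero,
    Nat.cast_one, Fin.reduceEq, reduceIte, sub_self, sub_zero, zero_mul, mul_zero, zero_div,
    zero_add, add_zero]
  simp only [btil, Matrix.cons_val_zero, Matrix.cons_val_one, Matrix.head_cons,
    Matrix.cons_val_two, Matrix.tail_cons, Nat.reduceAdd, adt0, adt1, adt2, adt3, adt4, adt5,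
    rit3, Function.comp_apply, Matrix.cons_add_cons, Matrix.empty_add_empty, rot3c,
    Bv_0_0_0_0,Bv_1_0_0_1,Bv_1_0_1_0,Bv_1_1_0_0,Bv_2_0_0_2,Bv_2_0_1_1,Bv_2_0_2_0,Bv_2_1_0_1,Bv_2_1_1_0,Bv_2_2_0_0,Bv_3_0_0_3,Bv_3_0_1_2,Bv_3_0_2_1,Bv_3_0_3_0,Bv_3_1_0_2,Bv_3_1_1_1,Bv_3_1_2_0,Bv_3_2_0_1,Bv_3_2_1_0,Bv_3_3_0_0,Bv_4_0_0_4,Bv_4_0_1_3,Bv_4_0_2_2,Bv_4_0_3_1,Bv_4_0_4_0,Bv_4_1_0_3,Bv_4_1_1_2,Bv_4_1_2_1,Bv_4_1_3_0,Bv_4_2_0_2,Bv_4_2_1_1,Bv_4_2_2_0,Bv_4_3_0_1,Bv_4_3_1_0,Bv_4_4_0_0,Bv_5_0_0_5,Bv_5_0_1_4,Bv_5_0_2_3,Bv_5_0_3_2,Bv_5_0_4_1,Bv_5_0_5_0,Bv_5_1_0_4,Bv_5_1_1_3,Bv_5_1_2_2,Bv_5_1_3_1,Bv_5_1_4_0,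Bv_5_2_0_3,Bv_5_2_1_2,Bv_5_2_2_1,Bv_5_2_3_0,Bv_5_3_0_2,Bv_5_3_1_1,Bv_5_3_2_0,Bv_5_4_0_1,Bv_5_4_1_0,Bv_5_5_0_0,
    mul_zero, zero_mul, add_zero, zero_add]
  ring

set_option maxHeartbeats 4000000 in
private lemma key2 (c : (Fin 3 → ℕ) → ℝ) :
    Ccoef (c ∘ rot3) 1 ![2, 2, 1] =
      Ccoef c 1 ![3, 2, 0] - 6 * Ccoef c 1 ![2, 3, 0]
        + 9 * Ccoef c 1 ![1, 4, 0] + 2 * Ccoef c 1 ![2, 2, 1]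
        - 6 * Ccoef c 1 ![1, 3, 1] + Ccoef c 1 ![1, 2, 2] := by
  simp only [Ccoef, adt5, Matrix.cons_val_zero, Matrix.cons_val_one, Matrix.head_cons,
    Matrix.cons_val_two, Matrix.tail_cons, Nat.reduceAdd, Nat.reduceSub,
    b1_0_0,b1_0_1,b1_0_2,b1_0_3,b1_0_4,b1_0_5,b1_1_0,b1_1_1,b1_1_2,b1_1_3,b1_1_4,b1_1_5,b1_2_0,b1_2_1,b1_2_2,b1_2_3,b1_2_4,b1_2_5,b1_3_0,b1_3_1,b1_3_2,b1_3_3,b1_3_4,b1_3_5,b1_4_0,b1_4_1,b1_4_2,b1_4_3,b1_4_4,b1_4_5,b1_5_0,b1_5_1,b1_5_2,b1_5_3,b1_5_4,b1_5_5,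
    mul_zero, zero_mul, add_zero, zero_add]
  simp only [btil2, Fin.sum_univ_three, eps0, eps1, eps2, Matrix.cons_sub_cons,
    Matrix.empty_sub_empty, Matrix.cons_val_zero, Matrix.cons_val_one, Matrix.head_cons,
    Matrix.cons_val_two, Matrix.tail_cons, Nat.reduceSub, Nat.cast_ofNat, Nat.cast_zero,
    Nat.cast_one, Fin.reduceEq, reduceIte, sub_self, sub_zero, zero_mul, mul_zero, zero_div,
    zero_add, add_zero]
  simp only [btil, Matrix.cons_val_zero, Matrix.cons_val_one, Matrix.head_cons,
    Matrix.cons_val_two, Matrix.tail_cons, Nat.reduceAdd, adt0, adt1, adt2, adt3, adt4, adt5,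
    rit3, Function.comp_apply, Matrix.cons_add_cons, Matrix.empty_add_empty, rot3c,
    Bv_0_0_0_0,Bv_1_0_0_1,Bv_1_0_1_0,Bv_1_1_0_0,Bv_2_0_0_2,Bv_2_0_1_1,Bv_2_0_2_0,Bv_2_1_0_1,Bv_2_1_1_0,Bv_2_2_0_0,Bv_3_0_0_3,Bv_3_0_1_2,Bv_3_0_2_1,Bv_3_0_3_0,Bv_3_1_0_2,Bv_3_1_1_1,Bv_3_1_2_0,Bv_3_2_0_1,Bv_3_2_1_0,Bv_3_3_0_0,Bv_4_0_0_4,Bv_4_0_1_3,Bv_4_0_2_2,Bv_4_0_3_1,Bv_4_0_4_0,Bv_4_1_0_3,Bv_4_1_1_2,Bv_4_1_2_1,Bv_4_1_3_0,Bv_4_2_0_2,Bv_4_2_1_1,Bv_4_2_2_0,Bv_4_3_0_1,Bv_4_3_1_0,Bv_4_4_0_0,Bv_5_0_0_5,Bv_5_0_1_4,Bv_5_0_2_3,Bv_5_0_3_2,Bv_5_0_4_1,Bv_5_0_5_0,Bv_5_1_0_4,Bv_5_1_1_3,Bv_5_1_2_2,Bv_5_1_3_1,Bv_5_1_4_0,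Bv_5_2_0_3,Bv_5_2_1_2,Bv_5_2_2_1,Bv_5_2_3_0,Bv_5_3_0_2,Bv_5_3_1_1,Bv_5_3_2_0,Bv_5_4_0_1,Bv_5_4_1_0,Bv_5_5_0_0,
    mul_zero, zero_mul, add_zero, zero_add]
  ring

set_option maxHeartbeats 4000000 in
private lemma key3 (c : (Fin 3 → ℕ) → ℝ) :
    Ccoef (c ∘ rot3) 1 ![2, 3, 0] =
      Ccoef c 1 ![2, 3, 0] - 6 * Ccoef c 1 ![1, 4, 0]
        + 9 * Ccoef c 1 ![0, 5, 0] + 2 * Ccoef c 1 ![1, 3, 1]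
        - 6 * Ccoef c 1 ![0, 4, 1] + Ccoef c 1 ![0, 3, 2] := by
  simp only [Ccoef, adt5, Matrix.cons_val_zero, Matrix.cons_val_one, Matrix.head_cons,
    Matrix.cons_val_two, Matrix.tail_cons, Nat.reduceAdd, Nat.reduceSub,
    b1_0_0,b1_0_1,b1_0_2,b1_0_3,b1_0_4,b1_0_5,b1_1_0,b1_1_1,b1_1_2,b1_1_3,b1_1_4,b1_1_5,b1_2_0,b1_2_1,b1_2_2,b1_2_3,b1_2_4,b1_2_5,b1_3_0,b1_3_1,b1_3_2,b1_3_3,b1_3_4,b1_3_5,b1_4_0,b1_4_1,b1_4_2,b1_4_3,b1_4_4,b1_4_5,b1_5_0,b1_5_1,b1_5_2,b1_5_3,b1_5_4,b1_5_5,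
    mul_zero, zero_mul, add_zero, zero_add]
  simp only [btil2, Fin.sum_univ_three, eps0, eps1, eps2, Matrix.cons_sub_cons,
    Matrix.empty_sub_empty, Matrix.cons_val_zero, Matrix.cons_val_one, Matrix.head_cons,
    Matrix.cons_val_two, Matrix.tail_cons, Nat.reduceSub, Nat.cast_ofNat, Nat.cast_zero,
    Nat.cast_one, Fin.reduceEq, reduceIte, sub_self, sub_zero, zero_mul, mul_zero, zero_div,
    zero_add, add_zero]
  simp only [btil, Matrix.cons_val_zero, Matrix.cons_val_one, Matrix.head_cons,
    Matrix.cons_val_two, Matrix.tail_cons, Nat.reduceAdd, adt0, adt1, adt2, adt3, adt4, adt5,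
    rit3, Function.comp_apply, Matrix.cons_add_cons, Matrix.empty_add_empty, rot3c,
    Bv_0_0_0_0,Bv_1_0_0_1,Bv_1_0_1_0,Bv_1_1_0_0,Bv_2_0_0_2,Bv_2_0_1_1,Bv_2_0_2_0,Bv_2_1_0_1,Bv_2_1_1_0,Bv_2_2_0_0,Bv_3_0_0_3,Bv_3_0_1_2,Bv_3_0_2_1,Bv_3_0_3_0,Bv_3_1_0_2,Bv_3_1_1_1,Bv_3_1_2_0,Bv_3_2_0_1,Bv_3_2_1_0,Bv_3_3_0_0,Bv_4_0_0_4,Bv_4_0_1_3,Bv_4_0_2_2,Bv_4_0_3_1,Bv_4_0_4_0,Bv_4_1_0_3,Bv_4_1_1_2,Bv_4_1_2_1,Bv_4_1_3_0,Bv_4_2_0_2,Bv_4_2_1_1,Bv_4_2_2_0,Bv_4_3_0_1,Bv_4_3_1_0,Bv_4_4_0_0,Bv_5_0_0_5,Bv_5_0_1_4,Bv_5_0_2_3,Bv_5_0_3_2,Bv_5_0_4_1,Bv_5_0_5_0,Bv_5_1_0_4,Bv_5_1_1_3,Bv_5_1_2_2,Bv_5_1_3_1,Bv_5_1_4_0,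Bv_5_2_0_3,Bv_5_2_1_2,Bv_5_2_2_1,Bv_5_2_3_0,Bv_5_3_0_2,Bv_5_3_1_1,Bv_5_3_2_0,Bv_5_4_0_1,Bv_5_4_1_0,Bv_5_5_0_0,
    mul_zero, zero_mul, add_zero, zero_add]
  ring

theorem stmt14 (b : (Fin 3 → ℕ) → ℝ) :
    ∀ i ∈ ({1, 2, 3} : Finset ℕ), ∀ ρ ≤ 3,
      Ccoef b (i + 1) ![2, ρ, 3 - ρ] =
        Ccoef b i ![5 - ρ, ρ, 0] - 6 * Ccoef b i ![4 - ρ, ρ + 1, 0]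
          + 9 * Ccoef b i ![3 - ρ, ρ + 2, 0] + 2 * Ccoef b i ![4 - ρ, ρ, 1]
          - 6 * Ccoef b i ![3 - ρ, ρ + 1, 1] + Ccoef b i ![3 - ρ, ρ, 2] := by
  intro i hi ρ hρ
  fin_cases hi <;> interval_cases ρ
  · simp only [Nat.reduceAdd, Nat.reduceSub, C4, C3, C2]
    exact key0 b
  · simp only [Nat.reduceAdd, Nat.reduceSub, C4, C3, C2]
    exact key1 b
  · simp only [Nat.reduceAdd, Nat.reduceSub, C4, C3, C2]
    exact key2 b
  · simp only [Nat.reduceAdd, Nat.reduceSub, C4, C3, C2]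
    exact key3 b
  · simp only [Nat.reduceAdd, Nat.reduceSub, C4, C3, C2]
    exact key0 (b ∘ rot3)
  · simp only [Nat.reduceAdd, Nat.reduceSub, C4, C3, C2]
    exact key1 (b ∘ rot3)
  · simp only [Nat.reduceAdd, Nat.reduceSub, C4, C3, C2]
    exact key2 (b ∘ rot3)
  · simp only [Nat.reduceAdd, Nat.reduceSub, C4, C3, C2]
    exact key3 (b ∘ rot3)
  · simp only [Nat.reduceAdd, Nat.reduceSub, C4, C3, C2]
    exact key0 ((b ∘ rot3) ∘ rot3)
  · simp only [Nat.reduceAdd, Nat.reduceSub, C4, C3, C2]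
    exact key1 ((b ∘ rot3) ∘ rot3)
  · simp only [Nat.reduceAdd, Nat.reduceSub, C4, C3, C2]
    exact key2 ((b ∘ rot3) ∘ rot3)
  · simp only [Nat.reduceAdd, Nat.reduceSub, C4, C3, C2]
    exact key3 ((b ∘ rot3) ∘ rot3)
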